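/- Let λ ⋖ ν be partitions and let ι be the field endomorphism of ℚ(q,t) sending q ↦ q^{−1} and t ↦ t^{−1}. Then ι(α_{ν/λ}(q,t)) = q^{n'(ν/λ)} t^{n(ν/λ)} · α_{ν/λ}(q,t) and ι(ᾱ_{ν/λ}(q,t)) = q^{n'(ν/λ)} t^{n(ν/λ)} · ᾱ_{ν/λ}(q,t). -/

import Mathlib

open Finset

noncomputable section

/-- The field `ℚ(q,t)` of rational functions in two variables over `ℚ`. -/
abbrev K : Type := FractionRing (MvPolynomial (Fin 2) ℚ)

def q : K := algebraMap (MvPolynomial (Fin 2) ℚ) K (MvPolynomial.X 0)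
def t : K := algebraMap (MvPolynomial (Fin 2) ℚ) K (MvPolynomial.X 1)

/-- Arm-length of the cell `c = (row, col)` of `κ` (cells are 0-indexed, Mathlib convention). -/
def arm (κ : YoungDiagram) (c : ℕ × ℕ) : ℕ := κ.rowLen c.1 - c.2 - 1

/-- Leg-length of the cell `c = (row, col)` of `κ`. -/
def leg (κ : YoungDiagram) (c : ℕ × ℕ) : ℕ := κ.colLen c.2 - c.1 - 1

/-- Hook-length of the cell `c` of `κ`. -/
def hook (κ : YoungDiagram) (c : ℕ × ℕ) : ℕ := arm κ c + leg κ c + 1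

/-- `Covers μ λ` means `μ ⋖ λ` in Young's lattice. -/
def Covers (μ l : YoungDiagram) : Prop :=
  μ.cells ⊆ l.cells ∧ l.cells.card = μ.cells.card + 1

open scoped Classical in
/-- For `μ ⋖ λ`, the set `R_{λ/μ}` of cells of `μ` in the same row as the unique cell of `λ/μ`. -/
def Rset (μ l : YoungDiagram) : Finset (ℕ × ℕ) :=
  μ.cells.filter fun c => ∃ d ∈ l.cells \ μ.cells, c.1 = d.1

open scoped Classical in
/-- For `μ ⋖ λ`, the set `C_{λ/μ}` of cells of `μ` in the same column as the unique cell of `λ/μ`. -/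
def Cset (μ l : YoungDiagram) : Finset (ℕ × ℕ) :=
  μ.cells.filter fun c => ∃ d ∈ l.cells \ μ.cells, c.2 = d.2

/-- `[i,j] = 1 - q^i t^j`. -/
def brk (i j : ℕ) : K := 1 - q ^ i * t ^ j

/-- `b_κ(c) = (1 - q^{a} t^{ℓ+1})/(1 - q^{a+1} t^{ℓ})`. -/
def bcell (κ : YoungDiagram) (c : ℕ × ℕ) : K :=
  brk (arm κ c) (leg κ c + 1) / brk (arm κ c + 1) (leg κ c)

/-- `ψ_{λ/μ}(q,t)` for `μ ⋖ λ`. -/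
def ψqt (μ l : YoungDiagram) : K := ∏ c ∈ Rset μ l, bcell μ c / bcell l c

/-- `φ_{λ/μ}(q,t)` for `μ ⋖ λ`. -/
def φqt (μ l : YoungDiagram) : K :=
  ((1 - t) / (1 - q)) * ∏ c ∈ Cset μ l, bcell l c / bcell μ c

/-- `α_{ν/λ}(q,t)` for `λ ⋖ ν`. -/
def alph (l ν : YoungDiagram) : K :=
  (∏ c ∈ Rset l ν, brk (arm l c) (leg l c + 1) / brk (arm ν c) (leg ν c + 1)) *
  (∏ c ∈ Cset l ν, brk (arm l c + 1) (leg l c) / brk (arm ν c + 1) (leg ν c))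

/-- `ᾱ_{ν/λ}(q,t)` for `λ ⋖ ν`. -/
def alphBar (l ν : YoungDiagram) : K :=
  (∏ c ∈ Rset l ν, brk (arm l c + 1) (leg l c) / brk (arm ν c + 1) (leg ν c)) *
  (∏ c ∈ Cset l ν, brk (arm l c) (leg l c + 1) / brk (arm ν c) (leg ν c + 1))

/-- `n(κ) = ∑_{c ∈ κ} ℓ_κ(c)` (as an integer). -/
def nstat (κ : YoungDiagram) : ℤ := ∑ c ∈ κ.cells, (leg κ c : ℤ)

/-- `n'(κ) = ∑_{c ∈ κ} a_κ(c)` (as an integer). -/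
def nstat' (κ : YoungDiagram) : ℤ := ∑ c ∈ κ.cells, (arm κ c : ℤ)



lemma q_ne_zero : q ≠ 0 := by
  intro h
  exact MvPolynomial.X_ne_zero 0
    (IsFractionRing.injective (MvPolynomial (Fin 2) ℚ) K (by simpa [q] using h))

lemma t_ne_zero : t ≠ 0 := by
  intro h
  exact MvPolynomial.X_ne_zero 1
    (IsFractionRing.injective (MvPolynomial (Fin 2) ℚ) K (by simpa [t] using h))

lemma iota_brk (ι : K →+* K) (hq : ι q = q⁻¹) (ht : ι t = t⁻¹) (i j : ℕ) :
    ι (brk i j) = -(q ^ i * t ^ j)⁻¹ * brk i j := by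
  have hq0 := q_ne_zero
  have ht0 := t_ne_zero
  simp only [brk, map_sub, map_one, map_mul, map_pow, hq, ht]
  field_simp
  rw [div_pow, div_pow, one_pow, one_pow]
  have e : (1 - 1 / q ^ i * (1 / t ^ j)) * q ^ i * t ^ j =
      q ^ i * t ^ j - (1 / q ^ i * q ^ i) * (1 / t ^ j * t ^ j) := by ring
  rw [e, one_div_mul_cancel (pow_ne_zero _ hq0), one_div_mul_cancel (pow_ne_zero _ ht0)]
  ring

lemma iota_brk_div (ι : K →+* K) (hq : ι q = q⁻¹) (ht : ι t = t⁻¹)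
    (a b a' b' : ℕ) (u : K) (hu : q ^ a' * t ^ b' = u * (q ^ a * t ^ b)) :
    ι (brk a b / brk a' b') = u * (brk a b / brk a' b') := by
  have hP : q ^ a * t ^ b ≠ 0 :=
    mul_ne_zero (pow_ne_zero _ q_ne_zero) (pow_ne_zero _ t_ne_zero)
  rw [map_div₀, iota_brk ι hq ht, iota_brk ι hq ht, neg_mul, neg_mul, neg_div_neg_eq,
    mul_div_mul_comm, inv_div_inv, hu, mul_div_cancel_right₀ u hP]

/-- Inversion symmetry: if `ι` is the field endomorphism of `ℚ(q,t)` with `ι q = q⁻¹` and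
`ι t = t⁻¹` (any ring homomorphism with these values — there is exactly one), then
`ι(α_{ν/λ}) = q^{n'(ν/λ)} t^{n(ν/λ)} α_{ν/λ}` and
`ι(ᾱ_{ν/λ}) = q^{n'(ν/λ)} t^{n(ν/λ)} ᾱ_{ν/λ}`. -/
theorem alpha_inversion_symmetry (l ν : YoungDiagram) (h : Covers l ν)
    (ι : K →+* K) (hq : ι q = q⁻¹) (ht : ι t = t⁻¹) :
    ι (alph l ν) = q ^ (nstat' ν - nstat' l) * t ^ (nstat ν - nstat l) * alph l ν ∧
    ι (alphBar l ν) = q ^ (nstat' ν - nstat' l) * t ^ (nstat ν - nstat l) * alphBar l ν := by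
  classical
  obtain ⟨hsub, hcard⟩ := h
  have hone : (ν.cells \ l.cells).card = 1 := by
    rw [Finset.card_sdiff_of_subset hsub, hcard]; omega
  obtain ⟨d, hd⟩ := Finset.card_eq_one.mp hone
  have hdmem : d ∈ ν.cells ∧ d ∉ l.cells := by
    have : d ∈ ν.cells \ l.cells := hd ▸ Finset.mem_singleton_self d
    simpa [Finset.mem_sdiff] using this
  have hνc : ν.cells = insert d l.cells := by
    have h1 : l.cells ∪ (ν.cells \ l.cells) = ν.cells := Finset.union_sdiff_of_subset hsub
    rw [hd] at h1
    rw [← h1]; ext c; simp [or_comm]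
  have hR : Rset l ν = l.cells.filter (fun c => c.1 = d.1) := by
    simp [Rset, hd]
  have hC : Cset l ν = l.cells.filter (fun c => c.2 = d.2) := by
    simp [Cset, hd]
  -- row and column lengths
  have hrow : ∀ r, ν.rowLen r = l.rowLen r + (if r = d.1 then 1 else 0) := by
    intro r
    rw [YoungDiagram.rowLen_eq_card, YoungDiagram.rowLen_eq_card]
    simp only [YoungDiagram.row]
    rw [hνc, Finset.filter_insert]
    rcases eq_or_ne r d.1 with hr | hr
    · rw [if_pos hr.symm, if_pos hr,
        Finset.card_insert_of_notMem (fun hm => hdmem.2 (Finset.mem_of_mem_filter _ hm))]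
    · rw [if_neg (Ne.symm hr), if_neg hr, add_zero]
  have hcol : ∀ r, ν.colLen r = l.colLen r + (if r = d.2 then 1 else 0) := by
    intro r
    rw [YoungDiagram.colLen_eq_card, YoungDiagram.colLen_eq_card]
    simp only [YoungDiagram.col]
    rw [hνc, Finset.filter_insert]
    rcases eq_or_ne r d.2 with hr | hr
    · rw [if_pos hr.symm, if_pos hr,
        Finset.card_insert_of_notMem (fun hm => hdmem.2 (Finset.mem_of_mem_filter _ hm))]
    · rw [if_neg (Ne.symm hr), if_neg hr, add_zero]
  -- arm/leg comparison on cells of l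
  have harm : ∀ c ∈ l.cells, (arm ν c : ℤ) = arm l c + (if c.1 = d.1 then 1 else 0) := by
    intro c hc
    have h1 : c.2 < l.rowLen c.1 := by
      rw [← YoungDiagram.mem_iff_lt_rowLen]
      simpa using (YoungDiagram.mem_cells c).mp hc
    simp only [arm, hrow c.1]
    split_ifs <;> omega
  have hleg : ∀ c ∈ l.cells, (leg ν c : ℤ) = leg l c + (if c.2 = d.2 then 1 else 0) := by
    intro c hc
    have h1 : c.1 < l.colLen c.2 := by
      rw [← YoungDiagram.mem_iff_lt_colLen]
      simpa using (YoungDiagram.mem_cells c).mp hc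
    simp only [leg, hcol c.2]
    split_ifs <;> omega
  -- the added cell has arm and leg 0 in ν
  have hrowd : ν.rowLen d.1 = d.2 + 1 := by
    have h1 : d.2 < ν.rowLen d.1 := by
      rw [← YoungDiagram.mem_iff_lt_rowLen]
      simpa using (YoungDiagram.mem_cells d).mp hdmem.1
    have h2 : (d.1, d.2 + 1) ∉ ν := by
      intro hm
      have hm' : (d.1, d.2 + 1) ∈ ν.cells := (YoungDiagram.mem_cells _).mpr hm
      rw [hνc, Finset.mem_insert] at hm'
      rcases hm' with hh | hh
      · exact absurd (congrArg Prod.snd hh).symm (by simp)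
      · refine hdmem.2 ((YoungDiagram.mem_cells d).mpr ?_)
        have := l.up_left_mem (le_refl d.1) (Nat.le_succ d.2) ((YoungDiagram.mem_cells _).mp hh)
        simpa using this
    rw [YoungDiagram.mem_iff_lt_rowLen] at h2
    omega
  have hcold : ν.colLen d.2 = d.1 + 1 := by
    have h1 : d.1 < ν.colLen d.2 := by
      rw [← YoungDiagram.mem_iff_lt_colLen]
      simpa using (YoungDiagram.mem_cells d).mp hdmem.1
    have h2 : (d.1 + 1, d.2) ∉ ν := by
      intro hm
      have hm' : (d.1 + 1, d.2) ∈ ν.cells := (YoungDiagram.mem_cells _).mpr hm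
      rw [hνc, Finset.mem_insert] at hm'
      rcases hm' with hh | hh
      · exact absurd (congrArg Prod.fst hh).symm (by simp)
      · refine hdmem.2 ((YoungDiagram.mem_cells d).mpr ?_)
        have := l.up_left_mem (Nat.le_succ d.1) (le_refl d.2) ((YoungDiagram.mem_cells _).mp hh)
        simpa using this
    rw [YoungDiagram.mem_iff_lt_colLen] at h2
    omega
  have harmd : arm ν d = 0 := by simp [arm, hrowd]
  have hlegd : leg ν d = 0 := by simp [leg, hcold]
  -- statistics
  have hRcard : nstat' ν - nstat' l = ((Rset l ν).card : ℤ) := by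
    unfold nstat'
    rw [hνc, Finset.sum_insert hdmem.2, harmd,
      Finset.sum_congr rfl harm, Finset.sum_add_distrib, Finset.sum_boole, hR]
    push_cast
    ring
  have hCcard : nstat ν - nstat l = ((Cset l ν).card : ℤ) := by
    unfold nstat
    rw [hνc, Finset.sum_insert hdmem.2, hlegd,
      Finset.sum_congr rfl hleg, Finset.sum_add_distrib, Finset.sum_boole, hC]
    push_cast
    ring
  -- arm/leg on Rset and Cset
  have hRfacts : ∀ c ∈ Rset l ν, arm ν c = arm l c + 1 ∧ leg ν c = leg l c := by
    intro c hc
    rw [hR, Finset.mem_filter] at hc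
    obtain ⟨hcl, hc1⟩ := hc
    have hne : c.2 ≠ d.2 := by
      intro heq
      exact hdmem.2 (Prod.ext hc1 heq ▸ hcl)
    have ha := harm c hcl
    have hl := hleg c hcl
    rw [if_pos hc1] at ha
    rw [if_neg hne] at hl
    omega
  have hCfacts : ∀ c ∈ Cset l ν, arm ν c = arm l c ∧ leg ν c = leg l c + 1 := by
    intro c hc
    rw [hC, Finset.mem_filter] at hc
    obtain ⟨hcl, hc2⟩ := hc
    have hne : c.1 ≠ d.1 := by
      intro heq
      exact hdmem.2 (Prod.ext heq hc2 ▸ hcl)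
    have ha := harm c hcl
    have hl := hleg c hcl
    rw [if_neg hne] at ha
    rw [if_pos hc2] at hl
    omega
  -- main computation
  have hmain1 : ι (alph l ν) = q ^ (Rset l ν).card * t ^ (Cset l ν).card * alph l ν := by
    unfold alph
    rw [map_mul, map_prod, map_prod]
    have h1 : ∀ c ∈ Rset l ν,
        ι (brk (arm l c) (leg l c + 1) / brk (arm ν c) (leg ν c + 1)) =
          q * (brk (arm l c) (leg l c + 1) / brk (arm ν c) (leg ν c + 1)) := by
      intro c hc
      obtain ⟨ha, hl⟩ := hRfacts c hc
      rw [ha, hl]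
      exact iota_brk_div ι hq ht _ _ _ _ q (by ring)
    have h2 : ∀ c ∈ Cset l ν,
        ι (brk (arm l c + 1) (leg l c) / brk (arm ν c + 1) (leg ν c)) =
          t * (brk (arm l c + 1) (leg l c) / brk (arm ν c + 1) (leg ν c)) := by
      intro c hc
      obtain ⟨ha, hl⟩ := hCfacts c hc
      rw [ha, hl]
      exact iota_brk_div ι hq ht _ _ _ _ t (by ring)
    rw [Finset.prod_congr rfl h1, Finset.prod_congr rfl h2, Finset.prod_mul_distrib,
      Finset.prod_mul_distrib, Finset.prod_const, Finset.prod_const]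
    ring
  have hmain2 : ι (alphBar l ν) = q ^ (Rset l ν).card * t ^ (Cset l ν).card * alphBar l ν := by
    unfold alphBar
    rw [map_mul, map_prod, map_prod]
    have h1 : ∀ c ∈ Rset l ν,
        ι (brk (arm l c + 1) (leg l c) / brk (arm ν c + 1) (leg ν c)) =
          q * (brk (arm l c + 1) (leg l c) / brk (arm ν c + 1) (leg ν c)) := by
      intro c hc
      obtain ⟨ha, hl⟩ := hRfacts c hc
      rw [ha, hl]
      exact iota_brk_div ι hq ht _ _ _ _ q (by ring)
    have h2 : ∀ c ∈ Cset l ν,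
        ι (brk (arm l c) (leg l c + 1) / brk (arm ν c) (leg ν c + 1)) =
          t * (brk (arm l c) (leg l c + 1) / brk (arm ν c) (leg ν c + 1)) := by
      intro c hc
      obtain ⟨ha, hl⟩ := hCfacts c hc
      rw [ha, hl]
      exact iota_brk_div ι hq ht _ _ _ _ t (by ring)
    rw [Finset.prod_congr rfl h1, Finset.prod_congr rfl h2, Finset.prod_mul_distrib,
      Finset.prod_mul_distrib, Finset.prod_const, Finset.prod_const]
    ring
  rw [hRcard, hCcard, zpow_natCast, zpow_natCast]
  exact ⟨hmain1, hmain2⟩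


end
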